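/- Let r ≥ 2. Then for all k, l ∈ {1, …, r}: E[((6/(r(r+1)))·(ρ(k) − ρ(l))² − 1)²] ≤ 7/5. -/

import Mathlib

open MeasureTheory Finset Real

noncomputable section

instance instMSPerm (r : ℕ) : MeasurableSpace (Equiv.Perm (Fin r)) := ⊤

/-- The law of a single uniformly random permutation of `{1, …, r}`. -/
def permMeasure (r : ℕ) : Measure (Equiv.Perm (Fin r)) :=
  (PMF.uniformOfFintype (Equiv.Perm (Fin r))).toMeasure

/-- `ρ(j) = π(j) - (r+1)/2`, where `π(j) ∈ {1, …, r}` (a permutation of `Fin r` assigns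
values in `{0, …, r-1}`, hence the `+ 1`). -/
def rho1 (r : ℕ) (j : Fin r) (g : Equiv.Perm (Fin r)) : ℝ :=
  ((g j : ℕ) : ℝ) + 1 - ((r : ℝ) + 1) / 2

end

instance instMSCPerm (r : ℕ) : MeasurableSingletonClass (Equiv.Perm (Fin r)) :=
  ⟨fun _ => MeasurableSpace.measurableSet_top⟩

lemma GR_pow_sums (n : ℕ) :
    (∑ i ∈ range n, (i:ℝ)) = n*(n-1)/2 ∧
    (∑ i ∈ range n, (i:ℝ)^2) = n*(n-1)*(2*n-1)/6 ∧
    (∑ i ∈ range n, (i:ℝ)^3) = (n*(n-1)/2)^2 ∧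
    (∑ i ∈ range n, (i:ℝ)^4) = n*(n-1)*(2*n-1)*(3*n^2-3*n-1)/30 := by
  induction n with
  | zero => norm_num
  | succ m ih =>
    obtain ⟨h1, h2, h3, h4⟩ := ih
    refine ⟨?_, ?_, ?_, ?_⟩ <;>
      rw [Finset.sum_range_succ] <;> push_cast <;> [rw [h1]; rw [h2]; rw [h3]; rw [h4]] <;> ring

lemma GR_sum_poly (n : ℕ) (a b c d e : ℝ) :
    ∑ i ∈ range n, (a*(i:ℝ)^4 + b*(i:ℝ)^3 + c*(i:ℝ)^2 + d*(i:ℝ) + e)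
      = a*(n*(n-1)*(2*n-1)*(3*n^2-3*n-1)/30) + b*(n*(n-1)/2)^2
        + c*(n*(n-1)*(2*n-1)/6) + d*(n*(n-1)/2) + e*n := by
  obtain ⟨h1, h2, h3, h4⟩ := GR_pow_sums n
  simp_rw [Finset.sum_add_distrib, ← Finset.mul_sum, h1, h2, h3, h4, Finset.sum_const,
    Finset.card_range, nsmul_eq_mul, mul_comm]

lemma GR_T_closed (n : ℕ) (c : ℝ) :
    ∑ i ∈ range n, ∑ j ∈ range n, (c*((i:ℝ)-(j:ℝ))^2 - 1)^2
      = c^2*(2*n*(n*(n-1)*(2*n-1)*(3*n^2-3*n-1)/30)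
              - 8*((n*(n-1)/2)^2)*(n*(n-1)/2) + 6*(n*(n-1)*(2*n-1)/6)^2)
        - 2*c*(2*n*(n*(n-1)*(2*n-1)/6) - 2*((n*(n-1)/2)^2)) + (n:ℝ)^2 := by
  have inner : ∀ x : ℝ, ∑ j ∈ range n, (c*(x-(j:ℝ))^2 - 1)^2
      = (c^2*n)*x^4 + (-4*c^2*(n*(n-1)/2))*x^3
        + (6*c^2*(n*(n-1)*(2*n-1)/6) - 2*c*n)*x^2
        + (-4*c^2*((n*(n-1)/2)^2) + 4*c*(n*(n-1)/2))*x
        + (c^2*(n*(n-1)*(2*n-1)*(3*n^2-3*n-1)/30) - 2*c*(n*(n-1)*(2*n-1)/6) + n) := by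
    intro x
    have step : ∑ j ∈ range n, (c*(x-(j:ℝ))^2 - 1)^2
        = ∑ j ∈ range n, ((c^2)*(j:ℝ)^4 + (-4*c^2*x)*(j:ℝ)^3 + (6*c^2*x^2-2*c)*(j:ℝ)^2
          + (-4*c^2*x^3+4*c*x)*(j:ℝ) + (c^2*x^4-2*c*x^2+1)) :=
      Finset.sum_congr rfl (fun j _ => by ring)
    rw [step, GR_sum_poly]
    ring
  have step2 : ∑ i ∈ range n, ∑ j ∈ range n, (c*((i:ℝ)-(j:ℝ))^2 - 1)^2
      = ∑ i ∈ range n, ((c^2*n)*(i:ℝ)^4 + (-4*c^2*(n*(n-1)/2))*(i:ℝ)^3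
        + (6*c^2*(n*(n-1)*(2*n-1)/6) - 2*c*n)*(i:ℝ)^2
        + (-4*c^2*((n*(n-1)/2)^2) + 4*c*(n*(n-1)/2))*(i:ℝ)
        + (c^2*(n*(n-1)*(2*n-1)*(3*n^2-3*n-1)/30) - 2*c*(n*(n-1)*(2*n-1)/6) + n)) :=
    Finset.sum_congr rfl (fun i _ => inner (i:ℝ))
  rw [step2, GR_sum_poly]
  ring

lemma GR_exists_perm_pair {r : ℕ} {k l k' l' : Fin r} (h : k ≠ l) (h' : k' ≠ l') :
    ∃ σ : Equiv.Perm (Fin r), σ k = k' ∧ σ l = l' := by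
  set τ := Equiv.swap k k' with hτ
  refine ⟨(Equiv.swap (τ l) l') * τ, ?_, ?_⟩
  · have hτk : τ k = k' := Equiv.swap_apply_left k k'
    have h1 : τ l ≠ k' := by
      rw [← hτk]; exact fun he => h (τ.injective he).symm |>.elim
    simp only [Equiv.Perm.mul_apply, hτk]
    exact Equiv.swap_apply_of_ne_of_ne h1.symm h'
  · simp only [Equiv.Perm.mul_apply]
    exact Equiv.swap_apply_left _ _

lemma GR_sum_perm_pair_eq {r : ℕ} (F : Fin r → Fin r → ℝ) {k l k' l' : Fin r}
    (h : k ≠ l) (h' : k' ≠ l') :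
    ∑ g : Equiv.Perm (Fin r), F (g k) (g l) = ∑ g : Equiv.Perm (Fin r), F (g k') (g l') := by
  obtain ⟨σ, hk, hl⟩ := GR_exists_perm_pair h' h
  refine Fintype.sum_equiv (Equiv.mulRight σ) _ _ fun g => ?_
  simp [Equiv.Perm.mul_apply, hk, hl]

lemma GR_perm_avg (r : ℕ) (F : Fin r → Fin r → ℝ) (hdiag : ∀ i, F i i = 1)
    {k l : Fin r} (hkl : k ≠ l) :
    ((r:ℝ) * ((r:ℝ) - 1)) * ∑ g : Equiv.Perm (Fin r), F (g k) (g l)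
      = (Fintype.card (Equiv.Perm (Fin r)) : ℝ)
          * ((∑ i : Fin r, ∑ j : Fin r, F i j) - r) := by
  have hr1 : 1 ≤ r := k.pos
  set N : ℕ := Fintype.card (Equiv.Perm (Fin r)) with hN
  set S : ℝ := ∑ g : Equiv.Perm (Fin r), F (g k) (g l) with hS
  set T : ℝ := ∑ i : Fin r, ∑ j : Fin r, F i j with hT
  have hinner : ∀ g : Equiv.Perm (Fin r), (∑ k' : Fin r, ∑ l' : Fin r, F (g k') (g l')) = T := by
    intro g
    calc ∑ k' : Fin r, ∑ l' : Fin r, F (g k') (g l')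
        = ∑ k' : Fin r, ∑ j : Fin r, F (g k') j :=
          Finset.sum_congr rfl fun k' _ => Equiv.sum_comp g (fun j => F (g k') j)
      _ = T := Equiv.sum_comp g (fun i => ∑ j : Fin r, F i j)
  have key : (∑ k' : Fin r, ∑ l' : Fin r, ∑ g : Equiv.Perm (Fin r), F (g k') (g l'))
      = (N : ℝ) * T := by
    rw [Finset.sum_comm]
    have : ∀ l' : Fin r, (∑ k' : Fin r, ∑ g : Equiv.Perm (Fin r), F (g k') (g l'))
        = ∑ g : Equiv.Perm (Fin r), ∑ k' : Fin r, F (g k') (g l') :=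
      fun l' => Finset.sum_comm
    rw [Finset.sum_congr rfl fun l' _ => this l', Finset.sum_comm]
    have hg : ∀ g : Equiv.Perm (Fin r), (∑ x : Fin r, ∑ k' : Fin r, F (g k') (g x)) = T :=
      fun g => Finset.sum_comm.trans (hinner g)
    rw [Finset.sum_congr rfl fun g _ => hg g, Finset.sum_const, Finset.card_univ,
      nsmul_eq_mul, hN]
  have split : ∀ k' : Fin r, (∑ l' : Fin r, ∑ g : Equiv.Perm (Fin r), F (g k') (g l'))
      = (N : ℝ) + ((r:ℝ) - 1) * S := by
    intro k'
    rw [← Finset.sum_erase_add univ _ (mem_univ k')]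
    have hd : (∑ g : Equiv.Perm (Fin r), F (g k') (g k')) = (N : ℝ) := by
      simp [hdiag, hN]
    have he : ∀ l' ∈ univ.erase k', (∑ g : Equiv.Perm (Fin r), F (g k') (g l')) = S := by
      intro l' hl'
      exact GR_sum_perm_pair_eq F (Finset.ne_of_mem_erase hl').symm hkl
    rw [Finset.sum_congr rfl he, Finset.sum_const, Finset.card_erase_of_mem (mem_univ k'),
      Finset.card_univ, Fintype.card_fin, nsmul_eq_mul, hd]
    push_cast [hr1]
    ring
  have total : (∑ k' : Fin r, ∑ l' : Fin r, ∑ g : Equiv.Perm (Fin r), F (g k') (g l'))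
      = (r : ℝ) * ((N : ℝ) + ((r:ℝ) - 1) * S) := by
    rw [Finset.sum_congr rfl fun k' _ => split k', Finset.sum_const, Finset.card_univ,
      Fintype.card_fin, nsmul_eq_mul]
  rw [total] at key
  linarith [key]

lemma GR_final_ineq (n : ℝ) (hn : 2 ≤ n) :
    ((6/(n*(n+1)))^2*(2*n*(n*(n-1)*(2*n-1)*(3*n^2-3*n-1)/30)
        - 8*((n*(n-1)/2)^2)*(n*(n-1)/2) + 6*(n*(n-1)*(2*n-1)/6)^2)
      - 2*(6/(n*(n+1)))*(2*n*(n*(n-1)*(2*n-1)/6) - 2*((n*(n-1)/2)^2)) + n^2 - n)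
      / (n*(n-1)) ≤ 7/5 := by
  have h0 : (0:ℝ) < n := by linarith
  have h1 : (0:ℝ) < n - 1 := by linarith
  have h2 : (0:ℝ) < n + 1 := by linarith
  have hpos : (0:ℝ) < n*(n-1) := mul_pos h0 h1
  rw [div_le_iff₀ hpos]
  have hE : (6/(n*(n+1)))^2*(2*n*(n*(n-1)*(2*n-1)*(3*n^2-3*n-1)/30)
        - 8*((n*(n-1)/2)^2)*(n*(n-1)/2) + 6*(n*(n-1)*(2*n-1)/6)^2)
      - 2*(6/(n*(n+1)))*(2*n*(n*(n-1)*(2*n-1)/6) - 2*((n*(n-1)/2)^2)) + n^2 - n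
      = (6/5)*(n-1)*(2*n^2-3)/(n+1) - n*(n-1) := by
    field_simp
    ring
  rw [hE, sub_le_iff_le_add, div_le_iff₀ h2]
  nlinarith [mul_nonneg (le_of_lt h1) (by linarith : (0:ℝ) ≤ 2*n+3)]

/-- **Lemma 3.8 (Gaunt–Reinert).** For `r ≥ 2` and all `k, l ∈ {1, …, r}`,
`E[((6/(r(r+1)))(ρ(k) − ρ(l))² − 1)²] ≤ 7/5`. -/
theorem rho_difference_squared_bound (r : ℕ) (hr : 2 ≤ r) (k l : Fin r) :
    ∫ p, (6 / ((r : ℝ) * ((r : ℝ) + 1)) * (rho1 r k p - rho1 r l p) ^ 2 - 1) ^ 2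
        ∂(permMeasure r) ≤ 7 / 5 := by
  set c : ℝ := 6 / ((r : ℝ) * ((r : ℝ) + 1)) with hc
  have hdiff : ∀ p : Equiv.Perm (Fin r),
      rho1 r k p - rho1 r l p = ((p k : ℕ) : ℝ) - ((p l : ℕ) : ℝ) := by
    intro p; simp only [rho1]; ring
  set F : Fin r → Fin r → ℝ := fun i j => (c * (((i : ℕ) : ℝ) - ((j : ℕ) : ℝ))^2 - 1)^2 with hF
  have hdiag : ∀ i, F i i = 1 := by intro i; simp [hF]
  set N : ℕ := Fintype.card (Equiv.Perm (Fin r)) with hN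
  have hNpos : 0 < N := Fintype.card_pos
  -- compute the integral as a finite average
  have hint : ∫ p, (c * (rho1 r k p - rho1 r l p) ^ 2 - 1) ^ 2 ∂(permMeasure r)
      = ((N : ℝ))⁻¹ * ∑ g : Equiv.Perm (Fin r), F (g k) (g l) := by
    rw [permMeasure, integral_fintype (Integrable.of_finite)]
    rw [Finset.mul_sum]
    refine Finset.sum_congr rfl fun g _ => ?_
    rw [measureReal_def, PMF.toMeasure_apply_singleton _ _ (MeasurableSpace.measurableSet_top),
      PMF.uniformOfFintype_apply]
    rw [hdiff g]
    simp [smul_eq_mul, ENNReal.toReal_inv, hF, hN]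
  rw [hint]
  by_cases hkl : k = l
  · subst hkl
    have : ∑ g : Equiv.Perm (Fin r), F (g k) (g k) = (N : ℝ) := by simp [hdiag, hN]
    rw [this, inv_mul_cancel₀ (by positivity)]
    norm_num
  · -- use the symmetry identity
    have havg := GR_perm_avg r F hdiag hkl
    have hr0 : (0:ℝ) < r := by positivity
    have hrr : (2:ℝ) ≤ (r:ℝ) := by exact_mod_cast hr
    have hpos : (0:ℝ) < (r:ℝ) * ((r:ℝ) - 1) := by nlinarith
    have hSval : ∑ g : Equiv.Perm (Fin r), F (g k) (g l)
        = (N : ℝ) * ((∑ i : Fin r, ∑ j : Fin r, F i j) - r) / ((r:ℝ) * ((r:ℝ) - 1)) := by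
      rw [eq_div_iff (ne_of_gt hpos)]
      rw [← hN] at havg
      linarith [havg]
    rw [hSval]
    have hT : (∑ i : Fin r, ∑ j : Fin r, F i j)
        = ∑ i ∈ range r, ∑ j ∈ range r, (c*((i:ℝ)-(j:ℝ))^2 - 1)^2 := by
      rw [← Fin.sum_univ_eq_sum_range (fun m => ∑ j ∈ range r, (c*((m:ℝ)-(j:ℝ))^2 - 1)^2) r]
      exact Finset.sum_congr rfl fun i _ =>
        (Fin.sum_univ_eq_sum_range (fun m => (c*(((i:ℕ):ℝ)-(m:ℝ))^2 - 1)^2) r)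
    have hfinal : ((N : ℝ))⁻¹ * ((N : ℝ) * ((∑ i : Fin r, ∑ j : Fin r, F i j) - r)
        / ((r:ℝ) * ((r:ℝ) - 1)))
        = ((∑ i : Fin r, ∑ j : Fin r, F i j) - r) / ((r:ℝ) * ((r:ℝ) - 1)) := by
      field_simp
    rw [hfinal, hT, GR_T_closed r c, hc]
    have := GR_final_ineq (r:ℝ) hrr
    calc (( 6/((r:ℝ)*((r:ℝ)+1)))^2*(2*(r:ℝ)*((r:ℝ)*((r:ℝ)-1)*(2*(r:ℝ)-1)*(3*(r:ℝ)^2-3*(r:ℝ)-1)/30)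
              - 8*(((r:ℝ)*((r:ℝ)-1)/2)^2)*((r:ℝ)*((r:ℝ)-1)/2) + 6*((r:ℝ)*((r:ℝ)-1)*(2*(r:ℝ)-1)/6)^2)
        - 2*(6/((r:ℝ)*((r:ℝ)+1)))*(2*(r:ℝ)*((r:ℝ)*((r:ℝ)-1)*(2*(r:ℝ)-1)/6) - 2*(((r:ℝ)*((r:ℝ)-1)/2)^2)) + (r:ℝ)^2 - (r:ℝ))
        / ((r:ℝ)*((r:ℝ)-1)) ≤ 7/5 := this
      _ = 7/5 := rfl
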